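/- Optimal transport cost between single-mode thermal Gaussian states (core of Theorem 4.3): let Δ = !![0, 1; -1, 0] and let J be the 4×4 complex matrix (Complex.I / 2) • Matrix.fromBlocks Δ 0 0 (−Δ) (entries coerced from ℝ to ℂ). For real numbers ν, ν' with 1/2 ≤ ν ≤ ν', the infimum of ν + ν' − (X 0 0 + X 1 1) over all real 2×2 matrices X such that both (Matrix.fromBlocks (ν' • 1) X Xᵀ (ν • 1), coerced to a complex 4×4 matrix) + J and the same matrix − J are positive semidefinite, equals (Real.sqrt (ν' + 1/2) − Real.sqrt (ν − 1/2))². -/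

import Mathlib

open Matrix
open scoped ComplexOrder

noncomputable section

/-- The single-mode symplectic form `Δ = !![0, 1; -1, 0]`. -/
def Δsymp : Matrix (Fin 2) (Fin 2) ℝ := !![0, 1; -1, 0]

/-- The matrix `J = (i/2) • fromBlocks Δ 0 0 (−Δ)` appearing in the uncertainty
relation for couplings of single-mode states. -/
def Jmat : Matrix (Fin 2 ⊕ Fin 2) (Fin 2 ⊕ Fin 2) ℂ :=
  (Complex.I / 2) • (Matrix.fromBlocks Δsymp 0 0 (-Δsymp)).map Complex.ofReal

lemma quadAux (a b x p q r s : ℝ) (ha : 0 ≤ a) (hb : 0 ≤ b) (hx : x^2 ≤ a*b) :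
    0 ≤ a*(p^2+q^2) + b*(r^2+s^2) + 2*x*(p*r+q*s) := by
  rcases le_or_gt 0 (x*(p*r+q*s)) with h | h
  · nlinarith [mul_nonneg ha (sq_nonneg p), mul_nonneg ha (sq_nonneg q),
      mul_nonneg hb (sq_nonneg r), mul_nonneg hb (sq_nonneg s)]
  · have hA : 0 ≤ a*(p^2+q^2) + b*(r^2+s^2) := by
      have h1 := mul_nonneg ha (add_nonneg (sq_nonneg p) (sq_nonneg q))
      have h2 := mul_nonneg hb (add_nonneg (sq_nonneg r) (sq_nonneg s))
      linarith
    have hsq : (2*x*(p*r+q*s))^2 ≤ (a*(p^2+q^2) + b*(r^2+s^2))^2 := by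
      nlinarith [sq_nonneg (a*(p^2+q^2) - b*(r^2+s^2)),
        mul_nonneg (mul_nonneg ha hb) (sq_nonneg (p*s - q*r)),
        mul_nonneg (sub_nonneg.2 hx) (sq_nonneg (p*r+q*s))]
    nlinarith [hA, hsq]

set_option maxHeartbeats 2000000 in
/-- **Optimal transport cost between single-mode thermal Gaussian states**
(core of Theorem 4.3). -/
theorem thermal_gaussian_optimal_cost (ν ν' : ℝ) (hν : 1 / 2 ≤ ν) (hνν' : ν ≤ ν') :
    sInf {c : ℝ | ∃ X : Matrix (Fin 2) (Fin 2) ℝ,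
        ((Matrix.fromBlocks (ν' • 1) X Xᵀ (ν • 1)).map Complex.ofReal + Jmat).PosSemidef ∧
        ((Matrix.fromBlocks (ν' • 1) X Xᵀ (ν • 1)).map Complex.ofReal - Jmat).PosSemidef ∧
        c = ν + ν' - (X 0 0 + X 1 1)}
      = (Real.sqrt (ν' + 1 / 2) - Real.sqrt (ν - 1 / 2)) ^ 2 := by
  have ha : (0:ℝ) ≤ ν' + 1/2 := by linarith
  have hb : (0:ℝ) ≤ ν - 1/2 := by linarith
  have ha' : (0:ℝ) ≤ ν' - 1/2 := by linarith
  have hb' : (0:ℝ) ≤ ν + 1/2 := by linarith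
  set sa := Real.sqrt (ν' + 1/2) with hsa
  set sb := Real.sqrt (ν - 1/2) with hsb
  have hsa2 : sa^2 = ν' + 1/2 := Real.sq_sqrt ha
  have hsb2 : sb^2 = ν - 1/2 := Real.sq_sqrt hb
  have hsa0 : 0 ≤ sa := Real.sqrt_nonneg _
  have hsb0 : 0 ≤ sb := Real.sqrt_nonneg _
  set x := sa * sb with hx
  have hxab : x^2 = (ν' + 1/2) * (ν - 1/2) := by rw [hx]; nlinarith
  have hxab' : x^2 ≤ (ν' - 1/2) * (ν + 1/2) := by nlinarith
  have hx0 : 0 ≤ x := mul_nonneg hsa0 hsb0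
  -- the witness
  set X₀ : Matrix (Fin 2) (Fin 2) ℝ := x • 1 with hX₀
  have hI : Complex.I / 2 = (Complex.ofReal (1/2)) * Complex.I := by push_cast; ring
  -- hermitian lemmas
  have herm1 : ((Matrix.fromBlocks (ν' • 1) X₀ X₀ᵀ (ν • 1)).map Complex.ofReal + Jmat).IsHermitian := by
    ext i j
    rw [Matrix.conjTranspose_apply]
    rcases i with i | i <;> rcases j with j | j <;> fin_cases i <;> fin_cases j <;>
      simp [Jmat, Δsymp, Matrix.fromBlocks, Matrix.smul_apply, Matrix.one_apply, hX₀,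
        Complex.ext_iff] <;> norm_num
  have herm2 : ((Matrix.fromBlocks (ν' • 1) X₀ X₀ᵀ (ν • 1)).map Complex.ofReal - Jmat).IsHermitian := by
    ext i j
    rw [Matrix.conjTranspose_apply]
    rcases i with i | i <;> rcases j with j | j <;> fin_cases i <;> fin_cases j <;>
      simp [Jmat, Δsymp, Matrix.fromBlocks, Matrix.smul_apply, Matrix.one_apply, hX₀,
        Complex.ext_iff] <;> norm_num
  -- PSD of witness
  have psd1 : ((Matrix.fromBlocks (ν' • 1) X₀ X₀ᵀ (ν • 1)).map Complex.ofReal + Jmat).PosSemidef := by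
    refine Matrix.PosSemidef.of_dotProduct_mulVec_nonneg herm1 (fun z => ?_)
    simp [dotProduct, Matrix.mulVec, Fintype.sum_sum_type, Fin.sum_univ_two,
      Matrix.fromBlocks, Jmat, Δsymp, Matrix.one_apply, Matrix.add_apply, Matrix.map_apply,
      Matrix.of_apply, Matrix.smul_apply, hI, hX₀]
    rw [Complex.le_def]
    constructor
    · simp [Complex.add_re, Complex.mul_re, Complex.add_im, Complex.mul_im,
        Complex.sub_re, Complex.sub_im, Complex.neg_re, Complex.neg_im]
      nlinarith [quadAux (ν'-1/2) (ν+1/2) x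
          (((z (Sum.inl 0)).re + (z (Sum.inl 1)).im)/2) (((z (Sum.inl 0)).im - (z (Sum.inl 1)).re)/2)
          (((z (Sum.inr 0)).re + (z (Sum.inr 1)).im)/2) (((z (Sum.inr 0)).im - (z (Sum.inr 1)).re)/2)
          ha' hb' hxab',
        quadAux (ν'+1/2) (ν-1/2) x
          (((z (Sum.inl 0)).re - (z (Sum.inl 1)).im)/2) (((z (Sum.inl 0)).im + (z (Sum.inl 1)).re)/2)
          (((z (Sum.inr 0)).re - (z (Sum.inr 1)).im)/2) (((z (Sum.inr 0)).im + (z (Sum.inr 1)).re)/2)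
          ha hb hxab.le]
    · simp [Complex.add_re, Complex.mul_re, Complex.add_im, Complex.mul_im,
        Complex.sub_re, Complex.sub_im, Complex.neg_re, Complex.neg_im]
      ring
  have psd2 : ((Matrix.fromBlocks (ν' • 1) X₀ X₀ᵀ (ν • 1)).map Complex.ofReal - Jmat).PosSemidef := by
    refine Matrix.PosSemidef.of_dotProduct_mulVec_nonneg herm2 (fun z => ?_)
    simp [dotProduct, Matrix.mulVec, Fintype.sum_sum_type, Fin.sum_univ_two,
      Matrix.fromBlocks, Jmat, Δsymp, Matrix.one_apply, Matrix.sub_apply, Matrix.map_apply,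
      Matrix.of_apply, Matrix.smul_apply, hI, hX₀]
    rw [Complex.le_def]
    constructor
    · simp [Complex.add_re, Complex.mul_re, Complex.add_im, Complex.mul_im,
        Complex.sub_re, Complex.sub_im, Complex.neg_re, Complex.neg_im]
      nlinarith [quadAux (ν'+1/2) (ν-1/2) x
          (((z (Sum.inl 0)).re + (z (Sum.inl 1)).im)/2) (((z (Sum.inl 0)).im - (z (Sum.inl 1)).re)/2)
          (((z (Sum.inr 0)).re + (z (Sum.inr 1)).im)/2) (((z (Sum.inr 0)).im - (z (Sum.inr 1)).re)/2)
          ha hb hxab.le,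
        quadAux (ν'-1/2) (ν+1/2) x
          (((z (Sum.inl 0)).re - (z (Sum.inl 1)).im)/2) (((z (Sum.inl 0)).im + (z (Sum.inl 1)).re)/2)
          (((z (Sum.inr 0)).re - (z (Sum.inr 1)).im)/2) (((z (Sum.inr 0)).im + (z (Sum.inr 1)).re)/2)
          ha' hb' hxab']
    · simp [Complex.add_re, Complex.mul_re, Complex.add_im, Complex.mul_im,
        Complex.sub_re, Complex.sub_im, Complex.neg_re, Complex.neg_im]
      ring
  have hval : (sa - sb)^2 = ν + ν' - (X₀ 0 0 + X₀ 1 1) := by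
    have h00 : X₀ 0 0 = x := by simp [hX₀]
    have h11 : X₀ 1 1 = x := by simp [hX₀]
    rw [h00, h11]
    nlinarith
  have mem : (sa - sb)^2 ∈ {c : ℝ | ∃ X : Matrix (Fin 2) (Fin 2) ℝ,
        ((Matrix.fromBlocks (ν' • 1) X Xᵀ (ν • 1)).map Complex.ofReal + Jmat).PosSemidef ∧
        ((Matrix.fromBlocks (ν' • 1) X Xᵀ (ν • 1)).map Complex.ofReal - Jmat).PosSemidef ∧
        c = ν + ν' - (X 0 0 + X 1 1)} := ⟨X₀, psd1, psd2, hval⟩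
  -- lower bound
  have lb : ∀ c ∈ {c : ℝ | ∃ X : Matrix (Fin 2) (Fin 2) ℝ,
        ((Matrix.fromBlocks (ν' • 1) X Xᵀ (ν • 1)).map Complex.ofReal + Jmat).PosSemidef ∧
        ((Matrix.fromBlocks (ν' • 1) X Xᵀ (ν • 1)).map Complex.ofReal - Jmat).PosSemidef ∧
        c = ν + ν' - (X 0 0 + X 1 1)}, (sa - sb)^2 ≤ c := by
    rintro c ⟨X, -, h2, rfl⟩
    set s := X 0 0 + X 1 1 with hs
    have key : 0 ≤ 2*(ν'+1/2)*(-s)^2 + 2*(ν-1/2)*(2*(ν'+1/2))^2 + 2*s*(-s)*(2*(ν'+1/2)) := by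
      have H := h2.dotProduct_mulVec_nonneg (Sum.elim ![((-s : ℝ) : ℂ), (-s : ℝ) * Complex.I]
        ![((2*(ν'+1/2) : ℝ) : ℂ), (2*(ν'+1/2) : ℝ) * Complex.I])
      rw [Complex.le_def] at H
      obtain ⟨H, -⟩ := H
      simp [dotProduct, Matrix.mulVec, Fintype.sum_sum_type, Fin.sum_univ_two,
        Matrix.fromBlocks, Jmat, Δsymp, Matrix.one_apply, Matrix.sub_apply, Matrix.map_apply,
        Matrix.of_apply, Matrix.smul_apply, hI, Complex.add_re, Complex.mul_re, Complex.add_im,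
        Complex.mul_im, Complex.sub_re, Complex.sub_im, Complex.neg_re, Complex.neg_im] at H
      nlinarith [H]
    have hs2' : s^2 ≤ 4*((ν'+1/2)*(ν-1/2)) := by
      nlinarith [key, show (0:ℝ) < ν' + 1/2 by linarith]
    have h4 : (2*x)^2 = 4*((ν'+1/2)*(ν-1/2)) := by linear_combination 4*hxab
    have hs2 : s^2 ≤ (2*x)^2 := h4 ▸ hs2'
    have hsle : s ≤ 2*x := by nlinarith [hx0, sq_nonneg (s - 2*x), sq_nonneg (s + 2*x)]
    nlinarith
  exact le_antisymm (csInf_le ⟨(sa - sb)^2, lb⟩ mem) (le_csInf ⟨(sa - sb)^2, mem⟩ lb)
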